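/- For every complex-valued Schwartz function φ on ℝ, the limit L := lim_{ε→0⁺} ∫_ℝ (i/(x+iε)) φ(x) dx exists, and lim_{t→+∞} ∫_ℝ (∫₀ᵗ e^{ixs} ds) φ(x) dx = L. In other words, as tempered distributions, ∫₀ᵗ e^{ixt₁} dt₁ = (e^{ixt}−1)/(ix) converges to i/(x+i0) as t → +∞. -/

import Mathlib

open MeasureTheory Filter FourierTransform Real Set Complex

lemma aux_exp_integral (x ε : ℝ) (hε : 0 < ε) :
    ∫ s in Set.Ioi (0:ℝ), Complex.exp ((Complex.I * x - ε) * s)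
      = Complex.I / ((x : ℂ) + Complex.I * ε) := by
  set c : ℂ := Complex.I * x - ε with hc
  have hcre : c.re = -ε := by simp [hc]
  have hc0 : c ≠ 0 := by
    intro h
    rw [h] at hcre
    simp at hcre; linarith
  have hd : (x : ℂ) + Complex.I * ε ≠ 0 := by
    intro h
    have := congrArg Complex.im h
    simp at this; linarith
  have hint : IntegrableOn (fun s : ℝ => Complex.exp (c * s)) (Set.Ioi 0) := by
    apply Integrable.mono' (exp_neg_integrableOn_Ioi 0 hε)
    · exact (Complex.continuous_exp.comp (by fun_prop)).aestronglyMeasurable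
    · filter_upwards with s
      simp only [Complex.norm_exp]
      have : (c * s).re = -ε * s := by
        simp [hc, Complex.mul_re, Complex.sub_re]
      rw [this]
  have h1 : Tendsto (fun T : ℝ => ∫ s in (0:ℝ)..T, Complex.exp (c * s)) atTop
      (nhds (∫ s in Set.Ioi (0:ℝ), Complex.exp (c * s))) :=
    intervalIntegral_tendsto_integral_Ioi 0 hint tendsto_id
  have h2 : Tendsto (fun T : ℝ => ∫ s in (0:ℝ)..T, Complex.exp (c * s)) atTop
      (nhds (Complex.I / ((x : ℂ) + Complex.I * ε))) := by
    have heq : ∀ T : ℝ, (∫ s in (0:ℝ)..T, Complex.exp (c * s))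
        = (Complex.exp (c * T) - 1) / c := by
      intro T
      rw [integral_exp_mul_complex hc0]
      simp
    simp_rw [heq]
    have hlim : Tendsto (fun T : ℝ => Complex.exp (c * T)) atTop (nhds 0) := by
      rw [tendsto_zero_iff_norm_tendsto_zero]
      have hnorm : ∀ T : ℝ, ‖Complex.exp (c * T)‖ = Real.exp (-(ε * T)) := by
        intro T
        simp only [Complex.norm_exp]
        congr 1
        simp [hc, Complex.mul_re]
      simp_rw [hnorm]
      exact Real.tendsto_exp_neg_atTop_nhds_zero.comp
        (Tendsto.const_mul_atTop hε tendsto_id)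
    have hfin : Tendsto (fun T : ℝ => (Complex.exp (c * T) - 1) / c) atTop
        (nhds ((0 - 1) / c)) := (hlim.sub tendsto_const_nhds).div_const c
    convert hfin using 2
    rw [hc]
    rw [div_eq_div_iff hd (by rw [← hc]; exact hc0)]
    linear_combination (x:ℂ) * Complex.I_mul_I
  exact tendsto_nhds_unique h1 h2

lemma aux_g_eq (φ : SchwartzMap ℝ ℂ) (s : ℝ) :
    (∫ x : ℝ, Complex.exp (Complex.I * x * s) * φ x)
      = 𝓕 (⇑φ) (-(s / (2 * Real.pi))) := by
  rw [Real.fourier_real_eq_integral_exp_smul]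
  congr 1
  ext v
  rw [smul_eq_mul]
  congr 2
  have h : -2 * Real.pi * v * -(s / (2 * Real.pi)) = v * s := by
    field_simp
  rw [h]
  push_cast
  ring

lemma aux_g_integrable (φ : SchwartzMap ℝ ℂ) :
    Integrable (fun s : ℝ => ∫ x : ℝ, Complex.exp (Complex.I * x * s) * φ x) := by
  have hrep : (fun s : ℝ => ∫ x : ℝ, Complex.exp (Complex.I * x * s) * φ x)
      = fun s : ℝ => (SchwartzMap.fourierTransformCLM ℂ φ) ((-(2 * Real.pi)⁻¹) * s) := by
    ext s
    rw [aux_g_eq, SchwartzMap.fourierTransformCLM_apply, SchwartzMap.fourier_coe]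
    congr 1
    field_simp
  rw [hrep]
  exact (SchwartzMap.fourierTransformCLM ℂ φ).integrable.comp_mul_left'
    (by positivity |> fun h => neg_ne_zero.mpr (ne_of_gt h))

lemma aux_g_continuous (φ : SchwartzMap ℝ ℂ) :
    Continuous (fun s : ℝ => ∫ x : ℝ, Complex.exp (Complex.I * x * s) * φ x) := by
  have hrep : (fun s : ℝ => ∫ x : ℝ, Complex.exp (Complex.I * x * s) * φ x)
      = fun s : ℝ => (SchwartzMap.fourierTransformCLM ℂ φ) ((-(2 * Real.pi)⁻¹) * s) := by
    ext s
    rw [aux_g_eq, SchwartzMap.fourierTransformCLM_apply, SchwartzMap.fourier_coe]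
    congr 1
    field_simp
  rw [hrep]
  exact (SchwartzMap.fourierTransformCLM ℂ φ).continuous.comp (by continuity)

lemma aux_fubiniA (φ : SchwartzMap ℝ ℂ) {ε : ℝ} (hε : 0 < ε) :
    (∫ x : ℝ, (Complex.I / ((x : ℂ) + Complex.I * ε)) * φ x)
      = ∫ s in Set.Ioi (0:ℝ),
          ((Real.exp (-(ε * s)) : ℝ) : ℂ) * ∫ x : ℝ, Complex.exp (Complex.I * x * s) * φ x := by
  have hswap : Integrable (Function.uncurry
      (fun (x : ℝ) (s : ℝ) => Complex.exp ((Complex.I * x - ε) * s) * φ x))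
      (volume.prod (volume.restrict (Set.Ioi (0:ℝ)))) := by
    apply Integrable.mono'
      ((φ.integrable.norm).mul_prod
        (by have h := exp_neg_integrableOn_Ioi 0 hε; simp only [neg_mul] at h; exact h))
    · apply Continuous.aestronglyMeasurable
      exact (Complex.continuous_exp.comp (by fun_prop)).mul
        (φ.continuous.comp continuous_fst)
    · filter_upwards with p
      simp only [Function.uncurry, norm_mul, Complex.norm_exp]
      have : ((Complex.I * p.1 - ε) * p.2).re = -(ε * p.2) := by
        simp [Complex.mul_re]
      rw [this]
      rw [mul_comm]
  calc (∫ x : ℝ, (Complex.I / ((x : ℂ) + Complex.I * ε)) * φ x)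
      = ∫ x : ℝ, ∫ s in Set.Ioi (0:ℝ), Complex.exp ((Complex.I * x - ε) * s) * φ x := by
        congr 1; ext x
        rw [← aux_exp_integral x ε hε, ← smul_eq_mul, ← integral_smul_const]
        simp [smul_eq_mul]
    _ = ∫ s in Set.Ioi (0:ℝ), ∫ x : ℝ, Complex.exp ((Complex.I * x - ε) * s) * φ x :=
        integral_integral_swap hswap
    _ = ∫ s in Set.Ioi (0:ℝ),
          ((Real.exp (-(ε * s)) : ℝ) : ℂ) * ∫ x : ℝ, Complex.exp (Complex.I * x * s) * φ x := by
        congr 1; ext s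
        rw [← integral_const_mul]
        congr 1; ext x
        rw [← mul_assoc]
        congr 1
        rw [Complex.ofReal_exp, ← Complex.exp_add]
        congr 1
        push_cast
        ring

lemma aux_fubiniB (φ : SchwartzMap ℝ ℂ) {t : ℝ} (ht : 0 ≤ t) :
    (∫ x : ℝ, (∫ s in (0:ℝ)..t, Complex.exp (Complex.I * x * s)) * φ x)
      = ∫ s in (0:ℝ)..t, ∫ x : ℝ, Complex.exp (Complex.I * x * s) * φ x := by
  have hswap : Integrable (Function.uncurry
      (fun (x : ℝ) (s : ℝ) => Complex.exp (Complex.I * x * s) * φ x))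
      (volume.prod (volume.restrict (Set.Ioc (0:ℝ) t))) := by
    have hconst : Integrable (fun _ : ℝ => (1:ℝ)) (volume.restrict (Set.Ioc (0:ℝ) t)) := by
      have : IntegrableOn (fun _ : ℝ => (1:ℝ)) (Set.Ioc (0:ℝ) t) volume :=
        integrableOn_const measure_Ioc_lt_top.ne
      exact this
    apply Integrable.mono' ((φ.integrable.norm).mul_prod hconst)
    · apply Continuous.aestronglyMeasurable
      exact (Complex.continuous_exp.comp (by fun_prop)).mul
        (φ.continuous.comp continuous_fst)
    · filter_upwards with p
      simp only [Function.uncurry, norm_mul, Complex.norm_exp]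
      have : (Complex.I * p.1 * p.2).re = 0 := by simp [Complex.mul_re]
      rw [this]
      simp [mul_comm]
  rw [intervalIntegral.integral_of_le ht]
  calc (∫ x : ℝ, (∫ s in (0:ℝ)..t, Complex.exp (Complex.I * x * s)) * φ x)
      = ∫ x : ℝ, ∫ s in Set.Ioc (0:ℝ) t, Complex.exp (Complex.I * x * s) * φ x := by
        congr 1; ext x
        rw [intervalIntegral.integral_of_le ht, ← smul_eq_mul, ← integral_smul_const]
        simp [smul_eq_mul]
    _ = ∫ s in Set.Ioc (0:ℝ) t, ∫ x : ℝ, Complex.exp (Complex.I * x * s) * φ x :=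
        integral_integral_swap hswap

/-- As tempered distributions, `∫₀ᵗ e^{ixs} ds` converges to `i/(x+i0)` as `t → +∞`:
for every Schwartz function `φ`, the limit `L` of the `ε`-regularized pairings exists and
the pairing of the time integral with `φ` tends to `L`. -/
theorem time_integral_tendsto_i_div_x_plus_i0 (φ : SchwartzMap ℝ ℂ) :
    ∃ L : ℂ,
      Tendsto (fun ε : ℝ => ∫ x : ℝ, (Complex.I / ((x : ℂ) + Complex.I * (ε : ℂ))) * φ x)
        (nhdsWithin 0 (Set.Ioi 0)) (nhds L) ∧
      Tendsto (fun t : ℝ =>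
          ∫ x : ℝ, (∫ s in (0:ℝ)..t, Complex.exp (Complex.I * (x : ℂ) * (s : ℂ))) * φ x)
        atTop (nhds L) := by
  set g : ℝ → ℂ := fun s => ∫ x : ℝ, Complex.exp (Complex.I * x * s) * φ x with hg
  have hgint : Integrable g := aux_g_integrable φ
  have hgcont : Continuous g := aux_g_continuous φ
  have hgIoi : IntegrableOn g (Set.Ioi 0) := hgint.integrableOn
  refine ⟨∫ s in Set.Ioi (0:ℝ), g s, ?_, ?_⟩
  · have h1' : Tendsto (fun ε : ℝ => ∫ s in Set.Ioi (0:ℝ), ((Real.exp (-(ε * s)) : ℝ) : ℂ) * g s)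
        (nhdsWithin 0 (Set.Ioi 0)) (nhds (∫ s in Set.Ioi (0:ℝ), g s)) := by
      apply tendsto_integral_filter_of_dominated_convergence (fun s => ‖g s‖)
      · filter_upwards with ε
        exact ((Complex.continuous_ofReal.comp
          (Real.continuous_exp.comp (by continuity))).mul hgcont).aestronglyMeasurable
      · filter_upwards [self_mem_nhdsWithin] with ε hε
        refine (ae_restrict_mem measurableSet_Ioi).mono fun s hs => ?_
        rw [norm_mul]
        have h1 : ‖((Real.exp (-(ε * s)) : ℝ) : ℂ)‖ ≤ 1 := by
          rw [Complex.norm_real, Real.norm_eq_abs, abs_of_pos (Real.exp_pos _)]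
          apply Real.exp_le_one_iff.2
          have : (0:ℝ) < ε * s := mul_pos hε hs
          linarith
        calc ‖((Real.exp (-(ε * s)) : ℝ) : ℂ)‖ * ‖g s‖ ≤ 1 * ‖g s‖ :=
              mul_le_mul_of_nonneg_right h1 (norm_nonneg _)
          _ = ‖g s‖ := one_mul _
      · exact hgIoi.norm
      · filter_upwards with s
        have hc : Continuous (fun ε : ℝ => ((Real.exp (-(ε * s)) : ℝ) : ℂ) * g s) := by
          exact (Complex.continuous_ofReal.comp
            (Real.continuous_exp.comp (by continuity))).mul continuous_const
        have := (hc.tendsto 0).mono_left (nhdsWithin_le_nhds (s := Set.Ioi (0:ℝ)))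
        simpa using this
    apply h1'.congr'
    filter_upwards [self_mem_nhdsWithin] with ε hε
    exact (aux_fubiniA φ hε).symm
  · have h2' : Tendsto (fun t : ℝ => ∫ s in (0:ℝ)..t, g s) atTop
        (nhds (∫ s in Set.Ioi (0:ℝ), g s)) :=
      intervalIntegral_tendsto_integral_Ioi 0 hgIoi tendsto_id
    apply h2'.congr'
    filter_upwards [eventually_ge_atTop (0:ℝ)] with t ht
    exact (aux_fubiniB φ ht).symm
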